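/- Suppose Cay(ℤ₂ₖ; a, b, b+k) has a hamiltonian circuit H, gcd(a−b, k) = 1, gcd(a, 2k) ≠ 1, and gcd(b, k) ≠ 1. Then in each coset of the subgroup {0, k} of ℤ₂ₖ, exactly one of the two vertices travels by a and the other travels by b or b+k. -/

import Mathlib

/-- Suppose `Cay(ℤ₂ₖ; a, b, b+k)` has a hamiltonian circuit `σ`,
`gcd(a−b, k) = 1`, `gcd(a, 2k) ≠ 1` and `gcd(b, k) ≠ 1`. Then in each coset
`{i, i+k}` of the subgroup `{0, k}`, exactly one of the two vertices travels by `a`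
and the other travels by `b` or `b+k`. -/
theorem coset_travel_pattern (k : ℕ) (hk : 1 ≤ k) (a b : ℤ)
    (σ : Equiv.Perm (ZMod (2 * k)))
    (harc : ∀ v : ZMod (2 * k), σ v - v ∈
      ({(a : ZMod (2 * k)), (b : ZMod (2 * k)),
        (b : ZMod (2 * k)) + ((k : ℕ) : ZMod (2 * k))} : Set (ZMod (2 * k))))
    (hcyc : ∀ v w : ZMod (2 * k), ∃ i : ℕ, (σ ^ i) v = w)
    (h1 : Int.gcd (a - b) (k : ℤ) = 1)
    (h2 : Int.gcd a ((2 * k : ℕ) : ℤ) ≠ 1)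
    (h3 : Int.gcd b (k : ℤ) ≠ 1) :
    ∀ i : ZMod (2 * k),
      (σ i - i = (a : ZMod (2 * k)) ∧
        (σ (i + ((k : ℕ) : ZMod (2 * k))) - (i + ((k : ℕ) : ZMod (2 * k))) = (b : ZMod (2 * k)) ∨
         σ (i + ((k : ℕ) : ZMod (2 * k))) - (i + ((k : ℕ) : ZMod (2 * k))) =
           (b : ZMod (2 * k)) + ((k : ℕ) : ZMod (2 * k)))) ∨
      ((σ i - i = (b : ZMod (2 * k)) ∨
          σ i - i = (b : ZMod (2 * k)) + ((k : ℕ) : ZMod (2 * k))) ∧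
        σ (i + ((k : ℕ) : ZMod (2 * k))) - (i + ((k : ℕ) : ZMod (2 * k))) =
          (a : ZMod (2 * k))) := by
  classical
  have hk2 : 2 ≤ k := by
    by_contra h
    have hk1 : k = 1 := by omega
    apply h3
    rw [hk1]
    simp
  haveI : NeZero (2 * k) := ⟨by omega⟩
  haveI : NeZero k := ⟨by omega⟩
  set κ : ZMod (2 * k) := ((k : ℕ) : ZMod (2 * k)) with hκdef
  have hκκ : κ + κ = 0 := by
    have h2k : ((2 * k : ℕ) : ZMod (2 * k)) = 0 := ZMod.natCast_self _
    rw [hκdef]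
    push_cast at h2k
    linear_combination h2k
  have hκ0 : κ ≠ 0 := by
    rw [hκdef]
    intro h
    have hdvd := (ZMod.natCast_eq_zero_iff k (2 * k)).mp h
    have := Nat.le_of_dvd (by omega) hdvd
    omega
  set π : ZMod (2 * k) →+* ZMod k := ZMod.castHom (dvd_mul_left k 2) (ZMod k) with hπdef
  have hπκ : π κ = 0 := by
    rw [hκdef, map_natCast, ZMod.natCast_self]
  have hker : ∀ x : ZMod (2 * k), π x = 0 → x = 0 ∨ x = κ := by
    intro x hx
    have hval : ((x.val : ℕ) : ZMod (2 * k)) = x := ZMod.natCast_rightInverse x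
    rw [← hval, map_natCast] at hx
    have hdvd : k ∣ x.val := (ZMod.natCast_eq_zero_iff _ _).mp hx
    have hlt : x.val < 2 * k := ZMod.val_lt x
    obtain ⟨c, hc⟩ := hdvd
    have hc2 : c < 2 := by nlinarith
    have : x.val = 0 ∨ x.val = k := by interval_cases c <;> omega
    rcases this with h0 | h0
    · left; rw [← hval, h0]; simp
    · right; rw [← hval, h0, hκdef]
  have hknd : ¬ ((k : ℤ) ∣ (a - b)) := by
    intro h
    have h' : (k : ℤ) ∣ (Int.gcd (a - b) (k : ℤ) : ℤ) := Int.dvd_coe_gcd h dvd_rfl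
    rw [h1] at h'
    have := Int.le_of_dvd one_pos h'
    omega
  set d : ZMod (2 * k) := (a : ZMod (2 * k)) - (b : ZMod (2 * k)) with hd
  have hπd' : π d = ((a - b : ℤ) : ZMod k) := by
    rw [hd, map_sub, map_intCast, map_intCast]
    push_cast
    ring
  have hπd : π d ≠ 0 := by
    rw [hπd']
    intro h
    exact hknd ((ZMod.intCast_zmod_eq_zero_iff_dvd _ _).mp h)
  have hd0 : d ≠ 0 := fun h => hπd (by rw [h, map_zero])
  have hdκ : d ≠ κ := fun h => hπd (by rw [h, hπκ])
  have htot : ∀ v : ZMod (2 * k), (σ v - v = (a : ZMod (2 * k))) ∨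
      (σ v - v = (b : ZMod (2 * k)) ∨ σ v - v = (b : ZMod (2 * k)) + κ) := by
    intro v
    simpa using harc v
  -- step A: a double-a coset propagates by d = a - b
  have stepA : ∀ i : ZMod (2 * k), (σ i - i = (a : ZMod (2 * k))) →
      (σ (i + κ) - (i + κ) = (a : ZMod (2 * k))) →
      (σ (i + d) - (i + d) = (a : ZMod (2 * k))) ∧
      (σ (i + d + κ) - (i + d + κ) = (a : ZMod (2 * k))) := by
    intro i hA1 hA2
    have hσi : σ i = i + (a : ZMod (2 * k)) := by linear_combination hA1
    have hσiκ : σ (i + κ) = i + κ + (a : ZMod (2 * k)) := by linear_combination hA2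
    have key : ∀ w : ZMod (2 * k), (w = i + d ∨ w = i + d + κ) →
        σ w - w = (a : ZMod (2 * k)) := by
      intro w hw
      rcases htot w with h | h
      · exact h
      · exfalso
        have hσw : σ w = σ i ∨ σ w = σ (i + κ) := by
          rcases hw with rfl | rfl <;> rcases h with h | h
          · left; rw [hσi]; linear_combination h + hd
          · right; rw [hσiκ]; linear_combination h + hd
          · right; rw [hσiκ]; linear_combination h + hd
          · left; rw [hσi]; linear_combination h + hd + hκκ
        have hw' : w = i ∨ w = i + κ := by
          rcases hσw with h' | h'
          · exact Or.inl (σ.injective h')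
          · exact Or.inr (σ.injective h')
        rcases hw with rfl | rfl <;> rcases hw' with h' | h'
        · exact hd0 (by linear_combination h')
        · exact hdκ (by linear_combination h')
        · exact hdκ (by linear_combination h' - hκκ)
        · exact hd0 (by linear_combination h')
    exact ⟨key _ (Or.inl rfl), key _ (Or.inr rfl)⟩
  -- step B: a double-b coset propagates by -d
  have stepB : ∀ i : ZMod (2 * k),
      (σ i - i = (b : ZMod (2 * k)) ∨ σ i - i = (b : ZMod (2 * k)) + κ) →
      (σ (i + κ) - (i + κ) = (b : ZMod (2 * k)) ∨
        σ (i + κ) - (i + κ) = (b : ZMod (2 * k)) + κ) →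
      ((σ (i - d) - (i - d) = (b : ZMod (2 * k)) ∨
          σ (i - d) - (i - d) = (b : ZMod (2 * k)) + κ) ∧
       (σ (i - d + κ) - (i - d + κ) = (b : ZMod (2 * k)) ∨
          σ (i - d + κ) - (i - d + κ) = (b : ZMod (2 * k)) + κ)) := by
    intro i hB1 hB2
    have key : ∀ w : ZMod (2 * k), (w = i - d ∨ w = i - d + κ) →
        (σ w - w = (b : ZMod (2 * k)) ∨ σ w - w = (b : ZMod (2 * k)) + κ) := by
      intro w hw
      rcases htot w with h | h
      swap
      · exact h
      exfalso
      rcases hw with rfl | rfl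
      · -- σ w = i + b
        rcases hB1 with h1' | h1'
        · -- σ i = i + b = σ w
          have hwi := σ.injective (show σ (i - d) = σ i by linear_combination h - h1' + hd)
          exact hd0 (by linear_combination -hwi)
        · rcases hB2 with h2' | h2'
          · -- σ i = i+b+κ = σ (i+κ)
            have hwi := σ.injective (show σ i = σ (i + κ) by linear_combination h1' - h2')
            exact hκ0 (by linear_combination -hwi)
          · -- σ (i+κ) = i + b = σ w
            have hwi := σ.injective
              (show σ (i - d) = σ (i + κ) by linear_combination h - h2' + hd - hκκ)
            exact hdκ (by linear_combination -hwi - hκκ)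
      · -- σ w = i + b + κ
        rcases hB1 with h1' | h1'
        · rcases hB2 with h2' | h2'
          · -- σ (i+κ) = i+b+κ = σ w
            have hwi := σ.injective
              (show σ (i - d + κ) = σ (i + κ) by linear_combination h - h2' + hd)
            exact hd0 (by linear_combination -hwi)
          · -- σ (i+κ) = i + b = σ i
            have hwi := σ.injective (show σ i = σ (i + κ) by linear_combination h1' - h2' - hκκ)
            exact hκ0 (by linear_combination -hwi)
        · -- σ i = i+b+κ = σ w
          have hwi := σ.injective (show σ (i - d + κ) = σ i by linear_combination h - h1' + hd)
          exact hdκ (by linear_combination -hwi)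
    exact ⟨key _ (Or.inl rfl), key _ (Or.inr rfl)⟩
  -- the coprimality unit
  obtain ⟨x, y, hxy⟩ := Int.isCoprime_iff_gcd_eq_one.mpr h1
  have hc : ((x : ZMod k)) * ((a - b : ℤ) : ZMod k) = 1 := by
    have h0 := congrArg (fun z : ℤ => (z : ZMod k)) hxy
    push_cast at h0 ⊢
    simp only [ZMod.natCast_self, mul_zero, add_zero] at h0
    linear_combination h0
  -- if some coset is double-a, every vertex travels by a : contradiction with h2
  have allA : ∀ i0 : ZMod (2 * k), (σ i0 - i0 = (a : ZMod (2 * k))) →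
      (σ (i0 + κ) - (i0 + κ) = (a : ZMod (2 * k))) → False := by
    intro i0 hA1 hA2
    have chain : ∀ m : ℕ, (σ (i0 + m • d) - (i0 + m • d) = (a : ZMod (2 * k))) ∧
        (σ (i0 + m • d + κ) - (i0 + m • d + κ) = (a : ZMod (2 * k))) := by
      intro m
      induction m with
      | zero => simpa using ⟨hA1, hA2⟩
      | succ n ih =>
        have hst := stepA (i0 + n • d) ih.1 ih.2
        have e1 : i0 + (n + 1) • d = i0 + n • d + d := by rw [succ_nsmul]; ring
        rw [e1]
        exact hst
    have hall : ∀ v : ZMod (2 * k), σ v - v = (a : ZMod (2 * k)) := by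
      intro v
      have hm : ((((x : ZMod k) * π (v - i0)).val : ℕ) : ZMod k)
          = (x : ZMod k) * π (v - i0) := ZMod.natCast_rightInverse _
      have hπ0 : π (v - (i0 + ((x : ZMod k) * π (v - i0)).val • d)) = 0 := by
        rw [map_sub, map_add, nsmul_eq_mul, map_mul, map_natCast, hm, hπd', map_sub]
        linear_combination (-(π v - π i0)) * hc
      rcases hker _ hπ0 with h0 | h0
      · have hv : v = i0 + ((x : ZMod k) * π (v - i0)).val • d := by linear_combination h0
        rw [hv]; exact (chain _).1
      · have hv : v = i0 + ((x : ZMod k) * π (v - i0)).val • d + κ := by linear_combination h0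
        rw [hv]; exact (chain _).2
    have hpow : ∀ n : ℕ, (σ ^ n) 0 = (n : ZMod (2 * k)) * (a : ZMod (2 * k)) := by
      intro n
      induction n with
      | zero => simp
      | succ m ih =>
        rw [pow_succ', Equiv.Perm.mul_apply]
        have h := hall ((σ ^ m) 0)
        push_cast
        linear_combination h + ih
    obtain ⟨n, hn⟩ := hcyc 0 1
    rw [hpow n] at hn
    have hu : IsUnit ((a : ℤ) : ZMod (2 * k)) :=
      IsUnit.of_mul_eq_one ((n : ZMod (2 * k))) (by linear_combination hn)
    apply h2
    have hgcd : Int.gcd a ((2 * k : ℕ) : ℤ) = Nat.gcd a.natAbs (2 * k) := by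
      unfold Int.gcd
      rw [Int.natAbs_natCast]
    rcases Int.natAbs_eq a with hab | hab
    · rw [hab, Int.cast_natCast] at hu
      have hco := (ZMod.isUnit_iff_coprime a.natAbs (2 * k)).mp hu
      rw [hgcd]; exact hco
    · rw [hab, Int.cast_neg, Int.cast_natCast] at hu
      have hu' := hu.neg
      rw [neg_neg] at hu'
      have hco := (ZMod.isUnit_iff_coprime a.natAbs (2 * k)).mp hu'
      rw [hgcd]; exact hco
  -- if some coset is double-b, every vertex travels by b or b+κ : contradiction with h3
  have allB : ∀ i0 : ZMod (2 * k),
      (σ i0 - i0 = (b : ZMod (2 * k)) ∨ σ i0 - i0 = (b : ZMod (2 * k)) + κ) →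
      (σ (i0 + κ) - (i0 + κ) = (b : ZMod (2 * k)) ∨
        σ (i0 + κ) - (i0 + κ) = (b : ZMod (2 * k)) + κ) → False := by
    intro i0 hB1 hB2
    have chain : ∀ m : ℕ,
        ((σ (i0 - m • d) - (i0 - m • d) = (b : ZMod (2 * k)) ∨
            σ (i0 - m • d) - (i0 - m • d) = (b : ZMod (2 * k)) + κ) ∧
         (σ (i0 - m • d + κ) - (i0 - m • d + κ) = (b : ZMod (2 * k)) ∨
            σ (i0 - m • d + κ) - (i0 - m • d + κ) = (b : ZMod (2 * k)) + κ)) := by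
      intro m
      induction m with
      | zero => simpa using ⟨hB1, hB2⟩
      | succ n ih =>
        have hst := stepB (i0 - n • d) ih.1 ih.2
        have e1 : i0 - (n + 1) • d = i0 - n • d - d := by rw [succ_nsmul]; ring
        rw [e1]
        exact hst
    have hall : ∀ v : ZMod (2 * k),
        (σ v - v = (b : ZMod (2 * k)) ∨ σ v - v = (b : ZMod (2 * k)) + κ) := by
      intro v
      have hm : ((((x : ZMod k) * π (i0 - v)).val : ℕ) : ZMod k)
          = (x : ZMod k) * π (i0 - v) := ZMod.natCast_rightInverse _
      have hπ0 : π (v - (i0 - ((x : ZMod k) * π (i0 - v)).val • d)) = 0 := by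
        rw [map_sub, map_sub, nsmul_eq_mul, map_mul, map_natCast, hm, hπd', map_sub]
        linear_combination (π i0 - π v) * hc
      rcases hker _ hπ0 with h0 | h0
      · have hv : v = i0 - ((x : ZMod k) * π (i0 - v)).val • d := by linear_combination h0
        rw [hv]; exact (chain _).1
      · have hv : v = i0 - ((x : ZMod k) * π (i0 - v)).val • d + κ := by linear_combination h0
        rw [hv]; exact (chain _).2
    have hstep : ∀ v : ZMod (2 * k), π (σ v) = π v + ((b : ℤ) : ZMod k) := by
      intro v
      rcases hall v with h | h
      · have h' := congrArg π h
        rw [map_sub, map_intCast] at h'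
        linear_combination h'
      · have h' := congrArg π h
        rw [map_sub, map_add, map_intCast, hπκ] at h'
        linear_combination h'
    have hpow : ∀ n : ℕ, π ((σ ^ n) 0) = (n : ZMod k) * ((b : ℤ) : ZMod k) := by
      intro n
      induction n with
      | zero => simp
      | succ m ih =>
        rw [pow_succ', Equiv.Perm.mul_apply, hstep ((σ ^ m) 0), ih]
        push_cast
        ring
    obtain ⟨n, hn⟩ := hcyc 0 1
    have hπn := congrArg π hn
    rw [hpow n, map_one] at hπn
    have hu : IsUnit ((b : ℤ) : ZMod k) :=
      IsUnit.of_mul_eq_one ((n : ZMod k)) (by linear_combination hπn)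
    apply h3
    have hgcd : Int.gcd b (k : ℤ) = Nat.gcd b.natAbs k := by
      unfold Int.gcd
      rw [Int.natAbs_natCast]
    rcases Int.natAbs_eq b with hab | hab
    · rw [hab, Int.cast_natCast] at hu
      have hco := (ZMod.isUnit_iff_coprime b.natAbs k).mp hu
      rw [hgcd]; exact hco
    · rw [hab, Int.cast_neg, Int.cast_natCast] at hu
      have hu' := hu.neg
      rw [neg_neg] at hu'
      have hco := (ZMod.isUnit_iff_coprime b.natAbs k).mp hu'
      rw [hgcd]; exact hco
  -- conclusion
  intro i
  rcases htot i with hA | hB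
  · rcases htot (i + κ) with hA2 | hB2
    · exact (allA i hA hA2).elim
    · exact Or.inl ⟨hA, hB2⟩
  · rcases htot (i + κ) with hA2 | hB2
    · exact Or.inr ⟨hB, hA2⟩
    · exact (allB i hB hB2).elim
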